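/- Let L be the lattice with Gram matrix [[2,0,1],[0,2,1],[1,1,2k+2]] (k ≥ 0), basis λ₁, λ₂, τ, of discriminant d = 4+8k. The isometry g fixing λ₁, λ₂ with g(τ) = λ₁ + λ₂ − τ acts as −1 on the discriminant group L∨/L. -/

import Mathlib

/-- For the lattice [[2,0,1],[0,2,1],[1,1,2k+2]] (k ≥ 0), the isometry fixing
λ₁, λ₂ with τ ↦ λ₁ + λ₂ - τ acts as -1 on the discriminant group L∨/L. -/
theorem stmt_7 (k : ℤ) (kq : ℚ) (hq : kq = (k : ℚ)) (hk : 0 ≤ k) :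
    let G : Matrix (Fin 3) (Fin 3) ℚ := !![2,0,1;0,2,1;1,1,2*kq+2]
    let M : Matrix (Fin 3) (Fin 3) ℚ := !![1,0,1;0,1,1;0,0,-1]
    ∀ x : Fin 3 → ℚ,
      (∀ y : Fin 3 → ℤ, ∃ n : ℤ, dotProduct x (G.mulVec (fun i => (y i : ℚ))) = n) →
      ∃ z : Fin 3 → ℤ, M.mulVec x + x = fun i => (z i : ℚ) := by
  intro G M x h
  obtain ⟨a, ha⟩ := h ![1,0,0]
  obtain ⟨b, hb⟩ := h ![0,1,0]
  simp [G, dotProduct, Matrix.mulVec, Fin.sum_univ_three] at ha hb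
  refine ⟨![a, b, 0], ?_⟩
  funext i
  fin_cases i <;>
    simp [M, Matrix.mulVec, dotProduct, Fin.sum_univ_three] <;> linarith
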